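/- Let u ≠ s be the predecessor of v in the shortest path tree T of the weighted disk graph G rooted at s. Then |uv| ≥ |r_v − r_u|, unless r_v < r_u and v is a leaf of T. -/

import Mathlib

noncomputable section

/-- Points of the plane. -/
abbrev Pt := EuclideanSpace ℝ (Fin 2)

/-- Membership in the closed axis-parallel square of Euclidean diameter `d`
(side `d/√2`) centered at `p`. -/
def inSq (p : Pt) (d : ℝ) (x : Pt) : Prop :=
  ∀ i, |x i - p i| ≤ d / (2 * Real.sqrt 2)

/-- Adjacency in the weighted disk graph: distinct points whose disks intersect. -/
def Adj (r : Pt → ℝ) (x y : Pt) : Prop := x ≠ y ∧ dist x y ≤ r x + r y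

/-- A (simple) path from `s` to `v` in the weighted disk graph on `P`. -/
def IsPath (P : Set Pt) (r : Pt → ℝ) (s v : Pt) (L : List Pt) : Prop :=
  L.head? = some s ∧ L.getLast? = some v ∧ (∀ x ∈ L, x ∈ P) ∧ L.Nodup ∧ L.Chain' (Adj r)

/-- The length of a path: the sum of the Euclidean lengths of its edges. -/
def pathLen : List Pt → ℝ
  | [] => 0
  | [_] => 0
  | a :: b :: L => dist a b + pathLen (b :: L)

/-- Shortest-path distance from `s` to `v` in the weighted disk graph on `P`. -/
def spDist (P : Set Pt) (r : Pt → ℝ) (s v : Pt) : ℝ :=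
  sInf (pathLen '' {L | IsPath P r s v L})


lemma pathLen_nonneg : ∀ L : List Pt, 0 ≤ pathLen L
  | [] => le_refl _
  | [_] => le_refl _
  | _ :: b :: L => add_nonneg dist_nonneg (pathLen_nonneg (b :: L))

lemma pathLen_append : ∀ (M : List Pt) (c : Pt) (B : List Pt),
    pathLen (M ++ c :: B) = pathLen (M ++ [c]) + pathLen (c :: B)
  | [], c, B => by simp [pathLen]
  | [a], c, B => by simp [pathLen]
  | a :: a' :: M, c, B => by
    have ih := pathLen_append (a' :: M) c B
    simp only [List.cons_append, List.append_eq, pathLen] at *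
    rw [ih]; ring

lemma pathLen_concat : ∀ (L : List Pt) (b c : Pt), L.getLast? = some b →
    pathLen (L ++ [c]) = pathLen L + dist b c
  | [], b, c, h => by simp at h
  | [a], b, c, h => by
    simp only [List.getLast?_singleton, Option.some.injEq] at h
    subst h; simp [pathLen]
  | a :: a' :: L, b, c, h => by
    have h' : (a' :: L).getLast? = some b := by
      simpa [List.getLast?_cons_cons] using h
    have ih := pathLen_concat (a' :: L) b c h'
    simp only [List.cons_append, List.append_eq, pathLen] at *
    rw [ih]; ring

lemma spDist_le {P : Set Pt} {r : Pt → ℝ} {s v : Pt} {L : List Pt}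
    (h : IsPath P r s v L) : spDist P r s v ≤ pathLen L :=
  csInf_le ⟨0, by rintro _ ⟨L', _, rfl⟩; exact pathLen_nonneg L'⟩ ⟨L, h, rfl⟩

lemma concat_shortest (P : Set Pt) (r : Pt → ℝ) (s : Pt)
    (b c : Pt) (hcP : c ∈ P) (hcs : c ≠ s) (hbc : Adj r b c)
    (L : List Pt) (hL : IsPath P r s b L) (hLlen : pathLen L = spDist P r s b)
    (hle : spDist P r s b + dist b c ≤ spDist P r s c) :
    IsPath P r s c (L ++ [c]) ∧ pathLen (L ++ [c]) = spDist P r s c := by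
  obtain ⟨hhead, hlast, hmem, hnd, hch⟩ := hL
  have hbnec : b ≠ c := hbc.1
  have hdpos : 0 < dist b c := dist_pos.mpr hbnec
  have hblt : spDist P r s b < spDist P r s c := by linarith
  have hcL : c ∉ L := by
    intro hmemc
    obtain ⟨A, B, rfl⟩ := List.append_of_mem hmemc
    match A with
    | [] =>
      simp only [List.nil_append, List.head?_cons, Option.some.injEq] at hhead
      exact hcs hhead
    | a0 :: A' =>
      have hsub : (a0 :: A' ++ [c]).Sublist (a0 :: A' ++ c :: B) := by
        have : a0 :: A' ++ c :: B = (a0 :: A' ++ [c]) ++ B := by simp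
        rw [this]; exact List.sublist_append_left _ _
      have hpath : IsPath P r s c (a0 :: A' ++ [c]) := by
        refine ⟨?_, ?_, ?_, ?_, ?_⟩
        · simpa using hhead
        · exact List.getLast?_concat
        · exact fun x hx => hmem x (hsub.mem hx)
        · exact hnd.sublist hsub
        · have : a0 :: A' ++ c :: B = (a0 :: A' ++ [c]) ++ B := by simp
          rw [this] at hch
          exact (List.isChain_append.mp hch).1
      have h1 : spDist P r s c ≤ pathLen (a0 :: A' ++ [c]) := spDist_le hpath
      have h2 : pathLen (a0 :: A' ++ [c]) ≤ pathLen (a0 :: A' ++ c :: B) := by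
        have heq := pathLen_append (a0 :: A') c B
        linarith [pathLen_nonneg (c :: B)]
      rw [hLlen] at h2
      linarith
  have hLne : L ≠ [] := by rintro rfl; simp at hhead
  have hpath : IsPath P r s c (L ++ [c]) := by
    refine ⟨?_, ?_, ?_, ?_, ?_⟩
    · rw [List.head?_append_of_ne_nil _ hLne]; exact hhead
    · simp
    · intro x hx
      rcases List.mem_append.mp hx with h | h
      · exact hmem x h
      · simp at h; subst h; exact hcP
    · rw [List.nodup_append]
      exact ⟨hnd, List.nodup_singleton _, by
        intro x hx y hy
        simp at hy; subst hy; intro hxy; subst hxy; exact hcL hx⟩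
    · refine List.isChain_append.mpr ?_
      refine ⟨hch, List.isChain_singleton _, ?_⟩
      intro x hx y hy
      simp only [List.head?_cons, Option.mem_def, Option.some.injEq] at hy
      subst hy
      rw [hlast] at hx
      simp only [Option.mem_def, Option.some.injEq] at hx
      subst hx
      exact hbc
  have hlen : pathLen (L ++ [c]) = pathLen L + dist b c := pathLen_concat L b c hlast
  refine ⟨hpath, le_antisymm ?_ (spDist_le hpath)⟩
  rw [hlen, hLlen]; exact hle

lemma no_shortcut (P : Set Pt) (r : Pt → ℝ) (s : Pt)
    (huniq : ∀ v ∈ P, ∃! L, IsPath P r s v L ∧ pathLen L = spDist P r s v)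
    (a b c : Pt) (haP : a ∈ P) (hbP : b ∈ P) (hcP : c ∈ P)
    (hbs : b ≠ s) (hcs : c ≠ s)
    (hab : Adj r a b) (hbc : Adj r b c) (hac : dist a c ≤ r a + r c)
    (e1 : spDist P r s b = spDist P r s a + dist a b)
    (e2 : spDist P r s c = spDist P r s b + dist b c) : False := by
  obtain ⟨La, ⟨hLa, hLalen⟩, _⟩ := huniq a haP
  obtain ⟨Lb, ⟨hLb, hLblen⟩, hLbu⟩ := huniq b hbP
  obtain ⟨Lc, ⟨hLc, hLclen⟩, hLcu⟩ := huniq c hcP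
  have hdab : 0 < dist a b := dist_pos.mpr hab.1
  have hdbc : 0 < dist b c := dist_pos.mpr hbc.1
  have hanec : a ≠ c := by
    rintro rfl
    rw [e1] at e2
    linarith
  have h1 := concat_shortest P r s a b hbP hbs hab La hLa hLalen (le_of_eq e1.symm)
  have h2 := concat_shortest P r s b c hcP hcs hbc Lb hLb hLblen (le_of_eq e2.symm)
  have hacle : spDist P r s a + dist a c ≤ spDist P r s c := by
    rw [e2, e1]
    have := dist_triangle a b c
    linarith
  have h3 := concat_shortest P r s a c hcP hcs ⟨hanec, hac⟩ La hLa hLalen hacle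
  have eb : La ++ [b] = Lb := hLbu _ h1
  have ec1 : Lb ++ [c] = Lc := hLcu _ h2
  have ec2 : La ++ [c] = Lc := hLcu _ h3
  have l1 : La.length + 1 = Lb.length := by rw [← eb]; simp
  have l2 : Lb.length + 1 = Lc.length := by rw [← ec1]; simp
  have l3 : La.length + 1 = Lc.length := by rw [← ec2]; simp
  omega

/-- Assume every vertex of `P` is connected to `s` and shortest paths
from `s` are unique, and let `prv` be the predecessor function of the resulting shortest
path tree `T` rooted at `s` (so for `v ≠ s`, `prv v` is adjacent to `v` and
`d(v) = d(prv v) + |prv v, v|`). If `u = prv v ≠ s` is the predecessor of `v`, then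
`|uv| ≥ |r v − r u|`, unless `r v < r u` and `v` is a leaf of `T` (a predecessor of
no vertex). -/
theorem predecessor_radius_gap
    (P : Set Pt) (r : Pt → ℝ) (hr : ∀ p ∈ P, 1 ≤ r p)
    (s : Pt) (hs : s ∈ P)
    (hconn : ∀ v ∈ P, ∃ L, IsPath P r s v L)
    (huniq : ∀ v ∈ P, ∃! L, IsPath P r s v L ∧ pathLen L = spDist P r s v)
    (prv : Pt → Pt)
    (hprv : ∀ v ∈ P, v ≠ s → prv v ∈ P ∧ Adj r (prv v) v ∧
      spDist P r s v = spDist P r s (prv v) + dist (prv v) v)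
    (v : Pt) (hv : v ∈ P) (hvs : v ≠ s) (hus : prv v ≠ s)
    (hnot : ¬ (r v < r (prv v) ∧ ¬ ∃ x ∈ P, x ≠ s ∧ prv x = v)) :
    |r v - r (prv v)| ≤ dist (prv v) v := by
  by_contra hcon
  push_neg at hcon
  obtain ⟨huP, huv, hdv⟩ := hprv v hv hvs
  rcases le_or_gt (r (prv v)) (r v) with hle | hlt
  · have habs : |r v - r (prv v)| = r v - r (prv v) := abs_of_nonneg (by linarith)
    rw [habs] at hcon
    obtain ⟨hwP, hwu, hdu⟩ := hprv (prv v) huP hus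
    refine no_shortcut P r s huniq (prv (prv v)) (prv v) v hwP huP hv hus hvs hwu huv ?_ hdu hdv
    have t := dist_triangle (prv (prv v)) (prv v) v
    have := hwu.2
    linarith
  · have hx : ∃ x ∈ P, x ≠ s ∧ prv x = v := by
      by_contra hnx
      exact hnot ⟨hlt, hnx⟩
    obtain ⟨x, hxP, hxs, hxv⟩ := hx
    obtain ⟨_, hvx, hdx⟩ := hprv x hxP hxs
    rw [hxv] at hvx hdx
    have habs : |r v - r (prv v)| = r (prv v) - r v := by
      rw [abs_of_neg (by linarith)]; ring
    rw [habs] at hcon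
    refine no_shortcut P r s huniq (prv v) v x huP hv hxP hvs hxs huv hvx ?_ hdv hdx
    have t := dist_triangle (prv v) v x
    have := hvx.2
    linarith
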